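/- Every nonzero K-derivation d on K[x,y] of degree at most 1 (i.e., d(x) and d(y) are polynomials of total degree ≤ 1) admits a K-derivation δ on K[x,y] commuting with d such that d and δ are linearly independent over K(x,y). (Here K is a field of characteristic 0.) -/

import Mathlib

open MvPolynomial

lemma affine_decomp {K : Type*} [Field K] (p : MvPolynomial (Fin 2) K)
    (hp : p.totalDegree ≤ 1) :
    p = C (p.coeff 0) + C (p.coeff (Finsupp.single 0 1)) * X 0
        + C (p.coeff (Finsupp.single 1 1)) * X 1 := by
  ext m
  have hm : m = Finsupp.single 0 (m 0) + Finsupp.single 1 (m 1) := by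
    ext i; fin_cases i <;> simp [Finsupp.single_apply]
  by_cases h0 : m = 0
  · subst h0
    simp [coeff_X', Finsupp.single_eq_zero, eq_comm]
  by_cases h1 : m = Finsupp.single 0 1
  · subst h1
    simp [coeff_X', Finsupp.single_eq_zero, Finsupp.single_eq_single_iff, eq_comm]
  by_cases h2 : m = Finsupp.single 1 1
  · subst h2
    simp [coeff_X', Finsupp.single_eq_zero, Finsupp.single_eq_single_iff, eq_comm]
  · have hdeg : 1 < m 0 + m 1 := by
      by_contra hle
      push_neg at hle
      have hcase : (m 0 = 0 ∧ m 1 = 0) ∨ (m 0 = 1 ∧ m 1 = 0) ∨ (m 0 = 0 ∧ m 1 = 1) := by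
        omega
      rcases hcase with ⟨e0, e1⟩ | ⟨e0, e1⟩ | ⟨e0, e1⟩
      · exact h0 (by rw [hm, e0, e1]; simp)
      · exact h1 (by rw [hm, e0, e1]; simp)
      · exact h2 (by rw [hm, e0, e1]; simp)
    have hc : coeff m p = 0 := by
      apply coeff_eq_zero_of_totalDegree_lt
      have hsum : (∑ i ∈ m.support, m i) = m 0 + m 1 := by
        rw [Finset.sum_subset (Finset.subset_univ m.support)
          (by intro i _ hi; simpa using hi), Fin.sum_univ_two]
      omega
    rw [hc]
    simp [coeff_X', h0, h1, h2, eq_comm, Ne.symm h0, Ne.symm h1, Ne.symm h2]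

lemma der_affine {K : Type*} [Field K]
    (δ : Derivation K (MvPolynomial (Fin 2) K) (MvPolynomial (Fin 2) K)) (a b c : K) :
    δ (C a + C b * X 0 + C c * X 1) = C b * δ (X 0) + C c * δ (X 1) := by
  have hC : ∀ r : K, δ (C r : MvPolynomial (Fin 2) K) = 0 := fun r =>
    δ.map_algebraMap r
  rw [map_add, map_add, ← smul_eq_C_mul, ← smul_eq_C_mul, Derivation.map_smul,
    Derivation.map_smul, hC, smul_eq_C_mul, smul_eq_C_mul]
  simp

lemma main_aux {K : Type*} [Field K] [CharZero K]
    (d : Derivation K (MvPolynomial (Fin 2) K) (MvPolynomial (Fin 2) K))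
    (a0 a1 b00 b01 b10 b11 : K)
    (hu0 : d (X 0) = C a0 + C b00 * X 0 + C b01 * X 1)
    (hu1 : d (X 1) = C a1 + C b10 * X 0 + C b11 * X 1)
    (f0 f1 : MvPolynomial (Fin 2) K)
    (hc0 : d f0 = C b00 * f0 + C b01 * f1)
    (hc1 : d f1 = C b10 * f0 + C b11 * f1)
    (hW : d (X 0) * f1 - d (X 1) * f0 ≠ 0) :
    ∃ δ : Derivation K (MvPolynomial (Fin 2) K) (MvPolynomial (Fin 2) K),
      (∀ p, d (δ p) = δ (d p)) ∧
      ¬ ∃ g : FractionRing (MvPolynomial (Fin 2) K),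
        ((algebraMap (MvPolynomial (Fin 2) K) (FractionRing (MvPolynomial (Fin 2) K)) (δ (X 0))
            = g * algebraMap (MvPolynomial (Fin 2) K) (FractionRing (MvPolynomial (Fin 2) K)) (d (X 0)) ∧
          algebraMap (MvPolynomial (Fin 2) K) (FractionRing (MvPolynomial (Fin 2) K)) (δ (X 1))
            = g * algebraMap (MvPolynomial (Fin 2) K) (FractionRing (MvPolynomial (Fin 2) K)) (d (X 1))) ∨
         (algebraMap (MvPolynomial (Fin 2) K) (FractionRing (MvPolynomial (Fin 2) K)) (d (X 0))
            = g * algebraMap (MvPolynomial (Fin 2) K) (FractionRing (MvPolynomial (Fin 2) K)) (δ (X 0)) ∧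
          algebraMap (MvPolynomial (Fin 2) K) (FractionRing (MvPolynomial (Fin 2) K)) (d (X 1))
            = g * algebraMap (MvPolynomial (Fin 2) K) (FractionRing (MvPolynomial (Fin 2) K)) (δ (X 1)))) := by
  classical
  set δ : Derivation K (MvPolynomial (Fin 2) K) (MvPolynomial (Fin 2) K) :=
    mkDerivation K ![f0, f1] with hδ
  have hδ0 : δ (X 0) = f0 := by rw [hδ, mkDerivation_X]; rfl
  have hδ1 : δ (X 1) = f1 := by rw [hδ, mkDerivation_X]; rfl
  refine ⟨δ, ?_, ?_⟩
  · -- commuting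
    have hbr : ⁅d, δ⁆ = 0 := by
      apply MvPolynomial.derivation_ext
      intro i
      fin_cases i
      · show ⁅d, δ⁆ (X 0) = (0 : Derivation _ _ _) (X 0)
        rw [Derivation.commutator_apply, hδ0, hu0, der_affine δ, hδ0, hδ1, hc0]
        simp [sub_self]
      · show ⁅d, δ⁆ (X 1) = (0 : Derivation _ _ _) (X 1)
        rw [Derivation.commutator_apply, hδ1, hu1, der_affine δ, hδ0, hδ1, hc1]
        simp [sub_self]
    intro p
    have := DFunLike.congr_fun hbr p
    rw [Derivation.commutator_apply] at this
    simpa [sub_eq_zero] using this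
  · rintro ⟨g, hg | hg⟩
    · obtain ⟨h1, h2⟩ := hg
      rw [hδ0] at h1; rw [hδ1] at h2
      apply hW
      apply IsFractionRing.injective (MvPolynomial (Fin 2) K)
        (FractionRing (MvPolynomial (Fin 2) K))
      rw [map_sub, map_mul, map_mul, h1, h2, map_zero]
      ring
    · obtain ⟨h1, h2⟩ := hg
      rw [hδ0] at h1; rw [hδ1] at h2
      apply hW
      apply IsFractionRing.injective (MvPolynomial (Fin 2) K)
        (FractionRing (MvPolynomial (Fin 2) K))
      rw [map_sub, map_mul, map_mul, h1, h2, map_zero]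
      ring

lemma algcase {K : Type*} [Field K] (a0 a1 b00 b01 b10 b11 v0 v1 : K)
    (hB : ¬(b01 = 0 ∧ b10 = 0 ∧ b00 = b11))
    (hv : ¬(v0 = 0 ∧ v1 = 0))
    (hk1 : b10 * v0 + b11 * v1 = 0)
    (h0 : a0 * v1 - a1 * v0 = 0) (h1 : b00 * v1 - b10 * v0 = 0)
    (h2 : b01 * v1 - b11 * v0 = 0) :
    ∃ p0 p1, b00 * p0 + b01 * p1 = a0 ∧ b10 * p0 + b11 * p1 = a1 := by
  by_cases hv0 : v0 = 0
  · have hv1 : v1 ≠ 0 := fun h => hv ⟨hv0, h⟩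
    subst hv0
    have hb00 : b00 = 0 := by
      have := h1; simp only [mul_zero, sub_zero] at this
      exact (mul_eq_zero.mp this).resolve_right hv1
    have hb01 : b01 = 0 := by
      have := h2; simp only [mul_zero, sub_zero] at this
      exact (mul_eq_zero.mp this).resolve_right hv1
    have ha0 : a0 = 0 := by
      have := h0; simp only [mul_zero, sub_zero] at this
      exact (mul_eq_zero.mp this).resolve_right hv1
    have hb11 : b11 = 0 := by
      have := hk1; simp only [mul_zero, zero_add] at this
      exact (mul_eq_zero.mp this).resolve_right hv1
    have hb10 : b10 ≠ 0 := fun h => hB ⟨hb01, h, by rw [hb00, hb11]⟩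
    exact ⟨a1 / b10, 0, by rw [hb00, hb01]; ring_nf; exact ha0.symm,
      by rw [hb11]; field_simp; ring⟩
  · by_cases hb00 : b00 = 0
    · by_cases hb01 : b01 = 0
      · have hb10 : b10 = 0 := by
          have := h1; rw [hb00, zero_mul, zero_sub, neg_eq_zero] at this
          exact (mul_eq_zero.mp this).resolve_right hv0
        have hb11 : b11 = 0 := by
          have := h2; rw [hb01, zero_mul, zero_sub, neg_eq_zero] at this
          exact (mul_eq_zero.mp this).resolve_right hv0
        exact absurd ⟨hb01, hb10, by rw [hb00, hb11]⟩ hB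
      · refine ⟨0, a0 / b01, by field_simp; ring, ?_⟩
        have key : b11 * a0 = a1 * b01 :=
          mul_right_cancel₀ hv0 (by linear_combination (-a0) * h2 + b01 * h0)
        field_simp
        linear_combination key
    · refine ⟨a0 / b00, 0, by field_simp; ring, ?_⟩
      have key : b10 * a0 = a1 * b00 :=
        mul_right_cancel₀ hv0 (by linear_combination (-a0) * h1 + b00 * h0)
      field_simp
      linear_combination key

lemma lin0_ne {K : Type*} [Field K] {c t : K} (ht : t ≠ 0) :
    (C c + C t * X 0 : MvPolynomial (Fin 2) K) ≠ 0 := by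
  intro h
  have h' := congrArg (coeff (Finsupp.single 0 1)) h
  simp [coeff_X', eq_comm, Finsupp.single_eq_zero] at h'
  exact ht h'

lemma lin1_ne {K : Type*} [Field K] (c : K) :
    (C c + X 0 : MvPolynomial (Fin 2) K) ≠ 0 := by
  intro h
  have h' := congrArg (coeff (Finsupp.single 0 1)) h
  simp [coeff_X', eq_comm, Finsupp.single_eq_zero] at h'

lemma C_ne {K : Type*} [Field K] {c : K} (hc : c ≠ 0) :
    (C c : MvPolynomial (Fin 2) K) ≠ 0 := by
  intro h
  have h' := congrArg (coeff 0) h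
  simp at h'
  exact hc h'



/-- Every nonzero `K`-derivation on `K[x,y]` of degree ≤ 1 admits a commuting
derivation linearly independent from it over `K(x,y)`. -/
theorem stmt3 (K : Type*) [Field K] [CharZero K]
    (d : Derivation K (MvPolynomial (Fin 2) K) (MvPolynomial (Fin 2) K))
    (hd : d ≠ 0)
    (hdegx : (d (X 0)).totalDegree ≤ 1) (hdegy : (d (X 1)).totalDegree ≤ 1) :
    ∃ δ : Derivation K (MvPolynomial (Fin 2) K) (MvPolynomial (Fin 2) K),
      (∀ p, d (δ p) = δ (d p)) ∧
      ¬ ∃ g : FractionRing (MvPolynomial (Fin 2) K),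
        ((algebraMap (MvPolynomial (Fin 2) K) (FractionRing (MvPolynomial (Fin 2) K)) (δ (X 0))
            = g * algebraMap (MvPolynomial (Fin 2) K) (FractionRing (MvPolynomial (Fin 2) K)) (d (X 0)) ∧
          algebraMap (MvPolynomial (Fin 2) K) (FractionRing (MvPolynomial (Fin 2) K)) (δ (X 1))
            = g * algebraMap (MvPolynomial (Fin 2) K) (FractionRing (MvPolynomial (Fin 2) K)) (d (X 1))) ∨
         (algebraMap (MvPolynomial (Fin 2) K) (FractionRing (MvPolynomial (Fin 2) K)) (d (X 0))
            = g * algebraMap (MvPolynomial (Fin 2) K) (FractionRing (MvPolynomial (Fin 2) K)) (δ (X 0)) ∧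
          algebraMap (MvPolynomial (Fin 2) K) (FractionRing (MvPolynomial (Fin 2) K)) (d (X 1))
            = g * algebraMap (MvPolynomial (Fin 2) K) (FractionRing (MvPolynomial (Fin 2) K)) (δ (X 1)))) := by
  classical
  obtain ⟨a0, b00, b01, hu0⟩ :
      ∃ a b c, d (X 0) = C a + C b * X 0 + C c * X 1 :=
    ⟨_, _, _, affine_decomp _ hdegx⟩
  obtain ⟨a1, b10, b11, hu1⟩ :
      ∃ a b c, d (X 1) = C a + C b * X 0 + C c * X 1 :=
    ⟨_, _, _, affine_decomp _ hdegy⟩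
  have hdC : ∀ r : K, d (C r : MvPolynomial (Fin 2) K) = 0 := fun r =>
    d.map_algebraMap r
  by_cases hB : b01 = 0 ∧ b10 = 0 ∧ b00 = b11
  · obtain ⟨e01, e10, e00⟩ := hB
    subst e01; subst e10; subst e00
    by_cases hl : b00 = 0
    · -- B = 0 case
      subst hl
      have hne : ¬(a0 = 0 ∧ a1 = 0) := by
        rintro ⟨e1, e2⟩
        apply hd
        apply MvPolynomial.derivation_ext
        intro i
        fin_cases i
        · show d (X 0) = (0 : Derivation _ _ _) (X 0)
          rw [hu0, e1]; simp
        · show d (X 1) = (0 : Derivation _ _ _) (X 1)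
          rw [hu1, e2]; simp
      by_cases ha0 : a0 = 0
      · have ha1 : a1 ≠ 0 := fun h => hne ⟨ha0, h⟩
        apply main_aux d a0 a1 0 0 0 0 hu0 hu1 1 0
        · simp
        · simp
        · rw [hu1]
          intro h
          simp only [map_zero, zero_mul, add_zero, mul_zero, zero_sub, mul_one,
            neg_eq_zero] at h
          exact C_ne ha1 h
      · apply main_aux d a0 a1 0 0 0 0 hu0 hu1 0 1
        · simp
        · simp
        · rw [hu0]
          intro h
          simp only [map_zero, zero_mul, add_zero, mul_zero, sub_zero, mul_one] at h
          exact C_ne ha0 h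
    · -- B = λ I, λ ≠ 0
      apply main_aux d a0 a1 b00 0 0 b00 hu0 hu1 0 (C (a0 / b00) + X 0)
      · simp
      · rw [map_add, hdC, zero_add, hu0]
        have hae : b00 * (a0 / b00) = a0 := by field_simp
        rw [mul_add, ← map_mul, hae]
        simp
      · rw [hu0]
        simp only [map_zero, zero_mul, add_zero, mul_zero, sub_zero]
        exact mul_ne_zero (lin0_ne hl) (lin1_ne _)
  · by_cases hp : ∃ p0 p1, b00 * p0 + b01 * p1 = a0 ∧ b10 * p0 + b11 * p1 = a1
    · -- Euler case
      obtain ⟨p0, p1, hp0, hp1⟩ := hp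
      apply main_aux d a0 a1 b00 b01 b10 b11 hu0 hu1 (C p0 + X 0) (C p1 + X 1)
      · rw [map_add, hdC, zero_add, hu0, ← hp0]
        simp only [map_add, map_mul]
        ring
      · rw [map_add, hdC, zero_add, hu1, ← hp1]
        simp only [map_add, map_mul]
        ring
      · rw [hu0, hu1]
        intro h
        by_cases h10 : b10 = 0
        · by_cases h01 : b01 = 0
          · have hns : b00 ≠ b11 := fun e => hB ⟨h01, h10, e⟩
            have h' := congrArg (eval ![1 - p0, 1 - p1]) h
            simp [eval_C, eval_X] at h'
            exact hns (by linear_combination h' + hp0 - hp1 - h01 + h10)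
          · have h' := congrArg (eval ![-p0, 1 - p1]) h
            simp [eval_C, eval_X] at h'
            exact h01 (by linear_combination h' + hp0)
        · have h' := congrArg (eval ![1 - p0, -p1]) h
          simp [eval_C, eval_X] at h'
          exact h10 (by linear_combination -h' + hp1)
    · -- kernel constant case
      have hdet : b00 * b11 - b01 * b10 = 0 := by
        by_contra hdet
        exact hp ⟨(b11 * a0 - b01 * a1) / (b00 * b11 - b01 * b10),
          (b00 * a1 - b10 * a0) / (b00 * b11 - b01 * b10),
          by field_simp; ring, by
            rw [mul_div_assoc', mul_div_assoc', ← add_div, div_eq_iff hdet]; ring⟩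
      obtain ⟨v0, v1, hv, hk0, hk1⟩ :
          ∃ v0 v1, ¬(v0 = 0 ∧ v1 = 0) ∧ b00 * v0 + b01 * v1 = 0 ∧
            b10 * v0 + b11 * v1 = 0 := by
        by_cases hr : b00 = 0 ∧ b01 = 0
        · refine ⟨b11, -b10, ?_, by rw [hr.1, hr.2]; ring, by ring⟩
          rintro ⟨e1, e2⟩
          exact hB ⟨hr.2, neg_eq_zero.mp e2, by rw [hr.1, e1]⟩
        · refine ⟨b01, -b00, ?_, by ring, by linear_combination -hdet⟩
          rintro ⟨e1, e2⟩
          exact hr ⟨neg_eq_zero.mp e2, e1⟩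
      apply main_aux d a0 a1 b00 b01 b10 b11 hu0 hu1 (C v0) (C v1)
      · rw [hdC, ← map_mul, ← map_mul, ← map_add, hk0, map_zero]
      · rw [hdC, ← map_mul, ← map_mul, ← map_add, hk1, map_zero]
      · rw [hu0, hu1]
        intro h
        rw [mul_comm _ (C v1), mul_comm _ (C v0)] at h
        have e0 : a0 * v1 - a1 * v0 = 0 := by
          have h' := congrArg (coeff 0) h
          simp [coeff_X', eq_comm, Finsupp.single_eq_zero, coeff_C_mul] at h'
          linear_combination h'
        have e1 : b00 * v1 - b10 * v0 = 0 := by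
          have h' := congrArg (coeff (Finsupp.single 0 1)) h
          simp [coeff_X', eq_comm, Finsupp.single_eq_zero, coeff_C_mul,
            Finsupp.single_eq_single_iff] at h'
          linear_combination h'
        have e2 : b01 * v1 - b11 * v0 = 0 := by
          have h' := congrArg (coeff (Finsupp.single 1 1)) h
          simp [coeff_X', eq_comm, Finsupp.single_eq_zero, coeff_C_mul,
            Finsupp.single_eq_single_iff] at h'
          linear_combination h'
        exact hp (algcase a0 a1 b00 b01 b10 b11 v0 v1 hB hv hk1 e0 e1 e2)
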